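/- If A and B are bounded self-adjoint operators on a complex Hilbert space with AB = λBA and AB ≠ 0, then λ = 1 or λ = -1. -/

import Mathlib

variable {H : Type*} [NormedAddCommGroup H] [InnerProductSpace ℂ H] [CompleteSpace H]

theorem stmt7 (A B : H →L[ℂ] H) (lam : ℂ)
    (hA : IsSelfAdjoint A) (hB : IsSelfAdjoint B)
    (h : A * B = lam • (B * A)) (hne : A * B ≠ 0) :
    lam = 1 ∨ lam = -1 := by
  haveI : Nontrivial (H →L[ℂ] H) := ⟨A * B, 0, hne⟩
  have hstarAB : star (A * B) = B * A := by
    rw [star_mul, hA.star_eq, hB.star_eq]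
  have hstarBA : star (B * A) = A * B := by
    rw [star_mul, hA.star_eq, hB.star_eq]
  -- B*A = conj lam • (A*B)
  have h2 : B * A = (starRingEnd ℂ) lam • (A * B) := by
    calc B * A = star (A * B) := hstarAB.symm
    _ = star (lam • (B * A)) := by rw [h]
    _ = (starRingEnd ℂ) lam • star (B * A) := by rw [star_smul]; rfl
    _ = (starRingEnd ℂ) lam • (A * B) := by rw [hstarBA]
  -- |lam|^2 = 1
  have hmod : lam * (starRingEnd ℂ) lam = 1 := by
    have : A * B = (lam * (starRingEnd ℂ) lam) • (A * B) := by
      conv_lhs => rw [h, h2, smul_smul]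
    have hz : (lam * (starRingEnd ℂ) lam - 1) • (A * B) = 0 := by
      rw [sub_smul, one_smul, ← this, sub_self]
    rcases smul_eq_zero.mp hz with h' | h'
    · linear_combination h'
    · exact absurd h' hne
  have hlamne : lam ≠ 0 := by
    intro h0
    rw [h0, zero_mul] at hmod
    exact zero_ne_one hmod
  -- the positive element P
  set P : H →L[ℂ] H := (A * B) * (B * A) with hPdef
  have hPstar : P = star (B * A) * (B * A) := by rw [hstarBA]
  have hPsa : IsSelfAdjoint P := by rw [hPstar]; exact IsSelfAdjoint.star_mul_self _
  have hBA_ne : B * A ≠ 0 := by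
    intro h0
    rw [h0, smul_zero] at h
    exact hne h
  have hPne : P ≠ 0 := by
    intro h0
    have : ‖star (B * A) * (B * A)‖ = 0 := by rw [← hPstar, h0, norm_zero]
    rw [CStarRing.norm_star_mul_self] at this
    exact hBA_ne (by
      have := mul_self_eq_zero.mp this
      exact norm_eq_zero.mp this)
  -- spectrum of P (over ℝ) is nonneg
  have hPnn : ∀ x ∈ spectrum ℝ P, 0 ≤ x := by
    rw [hPstar]
    exact spectrum_star_mul_self_nonneg
  -- complex spectrum members are nonneg reals
  have hPnnC : ∀ z ∈ spectrum ℂ P, z = (z.re : ℂ) ∧ 0 ≤ z.re := by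
    intro z hz
    have hre := hPsa.mem_spectrum_eq_re hz
    refine ⟨hre, ?_⟩
    have : (algebraMap ℝ ℂ) z.re ∈ spectrum ℂ P := by
      rw [Complex.coe_algebraMap, ← hre]; exact hz
    exact hPnn z.re ((spectrum.algebraMap_mem_iff ℂ).mp this)
  -- exists nonzero point in spectrum
  obtain ⟨z, hzmem, hzne⟩ : ∃ z ∈ spectrum ℂ P, z ≠ 0 := by
    by_contra hc
    push_neg at hc
    have hsub : spectrum ℂ P ⊆ {0} := fun z hz => hc z hz
    have hrad : spectralRadius ℂ P = 0 := by
      rw [spectralRadius]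
      refine le_antisymm ?_ zero_le
      refine iSup₂_le fun k hk => ?_
      rw [hsub hk]
      simp
    rw [hPsa.spectralRadius_eq_nnnorm] at hrad
    exact hPne (by simpa using hrad)
  -- Q = A^2 B^2 = lam^2 • P
  have hQ : A * (A * (B * B)) = (lam ^ 2) • P := by
    have e1 : A * (A * (B * B)) = A * ((A * B) * B) := by noncomm_ring
    rw [e1, h]
    have e2 : A * ((lam • (B * A)) * B) = lam • ((A * B) * (A * B)) := by
      rw [smul_mul_assoc, mul_smul_comm]
      exact congrArg (lam • ·) (by noncomm_ring)
    have e3 : (A * B) * (A * B) = lam • P := by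
      nth_rewrite 2 [h]
      rw [mul_smul_comm, hPdef]
    rw [e2, e3, smul_smul, sq]
  -- spectrum swap
  have hswap : spectrum ℂ (A * (A * (B * B))) \ {0} = spectrum ℂ P \ {0} := by
    have := spectrum.nonzero_mul_comm (𝕜 := ℂ) A (A * (B * B))
    rw [this, hPdef]
    have : A * (B * B) * A = A * B * (B * A) := by noncomm_ring
    rw [this]
  -- lam^2 * z ∈ spectrum P
  have hmemQ : lam ^ 2 * z ∈ spectrum ℂ (A * (A * (B * B))) := by
    rw [hQ, spectrum.smul_eq_smul (lam ^ 2) P ⟨z, hzmem⟩]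
    exact ⟨z, hzmem, rfl⟩
  have hmemP : lam ^ 2 * z ∈ spectrum ℂ P := by
    have : lam ^ 2 * z ∈ spectrum ℂ (A * (A * (B * B))) \ {0} :=
      ⟨hmemQ, by simp [hzne, pow_ne_zero, hlamne, mul_ne_zero]⟩
    exact (hswap ▸ this).1
  -- conclude lam^2 = 1
  obtain ⟨hzre, hznn⟩ := hPnnC z hzmem
  obtain ⟨hwre, hwnn⟩ := hPnnC _ hmemP
  have hzrepos : (0 : ℝ) < z.re := by
    rcases lt_or_eq_of_le hznn with h' | h'
    · exact h'
    · exact absurd (by rw [hzre, ← h']; simp) hzne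
  have hlam2 : lam ^ 2 = ((lam ^ 2 * z).re / z.re : ℝ) := by
    rw [Complex.ofReal_div, ← hwre,
      eq_div_iff (show ((z.re : ℂ)) ≠ 0 by exact_mod_cast hzrepos.ne'), ← hzre]
  -- lam^2 is a nonneg real with |lam^2| = 1
  have habs : lam ^ 2 * (starRingEnd ℂ) (lam ^ 2) = 1 := by
    have : (lam * (starRingEnd ℂ) lam) ^ 2 = 1 := by rw [hmod, one_pow]
    calc lam ^ 2 * (starRingEnd ℂ) (lam ^ 2) = (lam * (starRingEnd ℂ) lam) ^ 2 := by
          rw [map_pow]; ring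
    _ = 1 := this
  set t : ℝ := (lam ^ 2 * z).re / z.re with ht
  have htnn : 0 ≤ t := div_nonneg hwnn hzrepos.le
  have hconj : (starRingEnd ℂ) (lam ^ 2) = lam ^ 2 := by
    rw [hlam2, Complex.conj_ofReal]
  have ht2 : (t : ℂ) * (t : ℂ) = 1 := by
    rw [← hlam2]
    nth_rewrite 2 [← hconj]
    exact habs
  have ht1 : t = 1 := by
    have : t * t = 1 := by exact_mod_cast ht2
    rcases mul_self_eq_one_iff.mp this with h' | h'
    · exact h'
    · linarith
  have : lam ^ 2 = 1 := by rw [hlam2, ht1, Complex.ofReal_one]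
  rw [sq] at this
  exact mul_self_eq_one_iff.mp this
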